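/- For every θ > 0 and every real t with e^t < θ + 1, the moment generating function of the Poisson–Lindley distribution satisfies ∑_{x=0}^∞ e^{tx} · θ²(x + θ + 2)/(θ + 1)^{x+3} = (θ²/(1 + θ)) · [1/(1 + θ − e^t)² + 1/(1 + θ − e^t)]. -/
import Mathlib


/-- For every `θ > 0` and every real `t` with `e^t < θ + 1`, the moment generating
function of the Poisson–Lindley distribution satisfies
`∑_{x=0}^∞ e^{tx} θ²(x + θ + 2)/(θ + 1)^{x+3}
  = (θ²/(1 + θ)) [1/(1 + θ − e^t)² + 1/(1 + θ − e^t)]`. -/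
theorem poissonLindley_mgf (θ : ℝ) (hθ : 0 < θ) (t : ℝ) (ht : Real.exp t < θ + 1) :
    ∑' x : ℕ, Real.exp (t * x) * (θ ^ 2 * ((x : ℝ) + θ + 2) / (θ + 1) ^ (x + 3)) =
      θ ^ 2 / (1 + θ) *
        (1 / (1 + θ - Real.exp t) ^ 2 + 1 / (1 + θ - Real.exp t)) := by
  set e := Real.exp t with he
  have hθ1 : (0:ℝ) < θ + 1 := by linarith
  have hθ1' : (θ + 1 : ℝ) ≠ 0 := ne_of_gt hθ1
  have he0 : 0 < e := Real.exp_pos t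
  set r : ℝ := e / (θ + 1) with hrdef
  have hr0 : 0 ≤ r := le_of_lt (div_pos he0 hθ1)
  have hr1 : r < 1 := (div_lt_one hθ1).2 ht
  have hrn : ‖r‖ < 1 := by rwa [Real.norm_eq_abs, abs_of_nonneg hr0]
  have hkey : ∀ x : ℕ, Real.exp (t * x) * (θ ^ 2 * ((x : ℝ) + θ + 2) / (θ + 1) ^ (x + 3))
      = θ ^ 2 / (θ + 1) ^ 3 * ((x : ℝ) * r ^ x) + θ ^ 2 * (θ + 2) / (θ + 1) ^ 3 * r ^ x := by
    intro x
    have hex : Real.exp (t * x) = e ^ x := by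
      rw [he, ← Real.exp_nat_mul, mul_comm]
    rw [hex, hrdef, div_pow, pow_add]
    have h1 : ((θ + 1) ^ x : ℝ) ≠ 0 := pow_ne_zero _ hθ1'
    field_simp
    ring
  rw [tsum_congr hkey]
  have hs1 : Summable (fun x : ℕ => (x : ℝ) * r ^ x) :=
    (hasSum_coe_mul_geometric_of_norm_lt_one hrn).summable
  have hs2 : Summable (fun x : ℕ => r ^ x) := summable_geometric_of_lt_one hr0 hr1
  rw [Summable.tsum_add (hs1.mul_left _) (hs2.mul_left _), tsum_mul_left, tsum_mul_left,
    tsum_coe_mul_geometric_of_norm_lt_one hrn, tsum_geometric_of_lt_one hr0 hr1]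
  have hs : (1 + θ - e : ℝ) ≠ 0 := by
    have : e < 1 + θ := by linarith
    linarith [this]
  have h1r : (1 - r : ℝ) ≠ 0 := by
    have : r ≠ 1 := ne_of_lt hr1
    intro h; apply this; linarith
  have hA : r / (1 - r) ^ 2 = e * (θ + 1) / (1 + θ - e) ^ 2 := by
    rw [hrdef]
    rw [div_eq_div_iff (by positivity) (by positivity)]
    field_simp
    ring
  have h1 : 1 - r = (1 + θ - e) / (θ + 1) := by
    rw [hrdef]
    field_simp
    ring
  have hB : (1 - r)⁻¹ = (θ + 1) / (1 + θ - e) := by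
    rw [h1, inv_div]
  rw [hA, hB]
  field_simp
  ring
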